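/- Let a, b > 1 and let ψ : ℕ → ℝ⁺ satisfy ∑_{n=1}^∞ 1/ψ(n) < ∞. Then there exists ω : ℕ → ℝ⁺ with ∑_{n=1}^∞ 1/ω(n) < ∞ such that ω(⌊log_b n⌋) ≤ ψ(⌊log_a n⌋) for all n. -/

import Mathlib

/-- If `ψ : ℕ → ℝ⁺` satisfies `∑ 1/ψ(n) < ∞` and `a, b > 1`, then there exists
`ω : ℕ → ℝ⁺` with `∑ 1/ω(n) < ∞` such that `ω(⌊log_b n⌋) ≤ ψ(⌊log_a n⌋)` for all `n ≥ 1`. -/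
theorem psi_change_of_base
    {a b : ℝ} (ha : 1 < a) (hb : 1 < b)
    {ψ : ℕ → ℝ} (hψpos : ∀ n, 0 < ψ n) (hψ : Summable fun n => 1 / ψ n) :
    ∃ ω : ℕ → ℝ, (∀ n, 0 < ω n) ∧ (Summable fun n => 1 / ω n) ∧
      ∀ n : ℕ, 1 ≤ n → ω ⌊Real.logb b n⌋₊ ≤ ψ ⌊Real.logb a n⌋₊ := by
  set c : ℝ := Real.logb a b with hcdef
  have hc0 : 0 < c := Real.logb_pos ha hb
  have hla : Real.log a ≠ 0 := ne_of_gt (Real.log_pos ha)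
  have hlb : Real.log b ≠ 0 := ne_of_gt (Real.log_pos hb)
  have hlog : ∀ x : ℝ, Real.logb a x = c * Real.logb b x := by
    intro x
    simp only [hcdef, Real.logb]
    field_simp
  -- the interval of possible values of `⌊log_a n⌋` when `⌊log_b n⌋ = m`
  set R : ℕ → Finset ℕ := fun m => Finset.Icc ⌊c * m⌋₊ ⌊c * (m + 1)⌋₊ with hRdef
  have hRne : ∀ m, (R m).Nonempty := by
    intro m
    refine Finset.nonempty_Icc.2 (Nat.floor_le_floor ?_)
    have : (m : ℝ) ≤ (m : ℝ) + 1 := by linarith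
    nlinarith
  set S : ℕ → ℝ := fun m => ∑ k ∈ R m, 1 / ψ k with hSdef
  have hSpos : ∀ m, 0 < S m := by
    intro m
    exact Finset.sum_pos (fun k _ => one_div_pos.2 (hψpos k)) (hRne m)
  -- membership of `⌊log_a n⌋` in `R ⌊log_b n⌋`
  have hmem : ∀ n : ℕ, 1 ≤ n → ⌊Real.logb a n⌋₊ ∈ R ⌊Real.logb b n⌋₊ := by
    intro n hn
    have hn1 : (1 : ℝ) ≤ (n : ℝ) := by exact_mod_cast hn
    have hnn : 0 ≤ Real.logb b n := Real.logb_nonneg hb hn1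
    set m : ℕ := ⌊Real.logb b n⌋₊ with hm
    have h1 : (m : ℝ) ≤ Real.logb b n := Nat.floor_le hnn
    have h2 : Real.logb b n < m + 1 := Nat.lt_floor_add_one _
    refine Finset.mem_Icc.2 ⟨?_, ?_⟩
    · refine Nat.floor_le_floor ?_
      rw [hlog]
      nlinarith
    · refine Nat.floor_le_floor ?_
      rw [hlog]
      nlinarith
  -- counting: for fixed k, the set of m with k ∈ R m is contained in a short interval
  have hcount : ∀ k m : ℕ, k ∈ R m →
      m ∈ Finset.Icc (⌈(k : ℝ) / c⌉₊ - 1) ⌊((k : ℝ) + 1) / c⌋₊ := by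
    intro k m hkm
    obtain ⟨h1, h2⟩ := Finset.mem_Icc.1 hkm
    refine Finset.mem_Icc.2 ⟨?_, ?_⟩
    · have hk : (k : ℝ) ≤ c * (m + 1) := by
        calc (k : ℝ) ≤ (⌊c * (m + 1)⌋₊ : ℝ) := by exact_mod_cast h2
        _ ≤ c * (m + 1) := Nat.floor_le (by positivity)
      have hdc : (k : ℝ) / c ≤ ((m + 1 : ℕ) : ℝ) := by
        rw [div_le_iff₀ hc0]; push_cast; nlinarith
      have := Nat.ceil_le.2 hdc
      omega
    · have hk : c * m < (k : ℝ) + 1 := by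
        by_contra hcon
        push_neg at hcon
        have : k + 1 ≤ ⌊c * m⌋₊ := Nat.le_floor (by exact_mod_cast hcon)
        omega
      have : (m : ℝ) ≤ ((k : ℝ) + 1) / c := by
        rw [le_div_iff₀ hc0]; nlinarith
      exact Nat.le_floor this
  -- the length of that interval is uniformly bounded
  have hcard : ∀ k : ℕ,
      (Finset.Icc (⌈(k : ℝ) / c⌉₊ - 1) ⌊((k : ℝ) + 1) / c⌋₊).card ≤ ⌈1 / c⌉₊ + 2 := by
    intro k
    have h1 : ((k : ℝ) + 1) / c ≤ ((⌈(k : ℝ) / c⌉₊ + ⌈1 / c⌉₊ : ℕ) : ℝ) := by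
      push_cast
      have a1 : (k : ℝ) / c ≤ ⌈(k : ℝ) / c⌉₊ := Nat.le_ceil _
      have a2 : 1 / c ≤ ⌈(1 : ℝ) / c⌉₊ := Nat.le_ceil _
      have : ((k : ℝ) + 1) / c = (k : ℝ) / c + 1 / c := by ring
      linarith [this.le]
    have h2 : ⌊((k : ℝ) + 1) / c⌋₊ ≤ ⌈(k : ℝ) / c⌉₊ + ⌈1 / c⌉₊ := by
      have h3 := Nat.floor_le_floor h1
      rwa [Nat.floor_natCast] at h3
    rw [Nat.card_Icc]
    omega
  -- ENNReal versions
  set F : ℕ → ENNReal := fun k => ENNReal.ofReal (1 / ψ k) with hFdef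
  have hFtop : ∀ k, F k ≠ ⊤ := fun k => ENNReal.ofReal_ne_top
  have htsumF : ∑' k, F k ≠ ⊤ := by
    rw [← ENNReal.ofReal_tsum_of_nonneg (fun k => (one_div_pos.2 (hψpos k)).le) hψ]
    exact ENNReal.ofReal_ne_top
  set G : ℕ → ENNReal := fun m => ∑ k ∈ R m, F k with hGdef
  have hGtop : ∑' m, G m ≠ ⊤ := by
    have key : ∑' m, G m ≤ (⌈1 / c⌉₊ + 2 : ℕ) * ∑' k, F k := by
      have step1 : ∀ m, G m = ∑' k, Set.indicator (R m : Set ℕ) F k := by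
        intro m
        rw [tsum_eq_sum (s := R m) (fun k hk => Set.indicator_of_notMem (by simpa using hk) _)]
        exact Finset.sum_congr rfl fun k hk => (Set.indicator_of_mem (by simpa using hk) _).symm
      calc ∑' m, G m = ∑' m, ∑' k, Set.indicator (R m : Set ℕ) F k := by
            exact tsum_congr step1
        _ = ∑' k, ∑' m, Set.indicator (R m : Set ℕ) F k := ENNReal.tsum_comm
        _ ≤ ∑' k, (⌈1 / c⌉₊ + 2 : ℕ) * F k := by
            refine ENNReal.tsum_le_tsum fun k => ?_
            have hpt : ∀ m, Set.indicator (R m : Set ℕ) F k ≤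
                Set.indicator ((Finset.Icc (⌈(k : ℝ) / c⌉₊ - 1) ⌊((k : ℝ) + 1) / c⌋₊ :
                  Finset ℕ) : Set ℕ) (fun _ => F k) m := by
              intro m
              by_cases hkm : k ∈ R m
              · rw [Set.indicator_of_mem (by simpa using hkm),
                  Set.indicator_of_mem (by simpa using hcount k m hkm)]
              · rw [Set.indicator_of_notMem (by simpa using hkm)]
                exact zero_le
            calc ∑' m, Set.indicator (R m : Set ℕ) F k
                ≤ ∑' m, Set.indicator ((Finset.Icc (⌈(k : ℝ) / c⌉₊ - 1)
                    ⌊((k : ℝ) + 1) / c⌋₊ : Finset ℕ) : Set ℕ) (fun _ => F k) m :=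
                  ENNReal.tsum_le_tsum hpt
              _ = ∑ m ∈ Finset.Icc (⌈(k : ℝ) / c⌉₊ - 1) ⌊((k : ℝ) + 1) / c⌋₊,
                    Set.indicator ((Finset.Icc (⌈(k : ℝ) / c⌉₊ - 1)
                      ⌊((k : ℝ) + 1) / c⌋₊ : Finset ℕ) : Set ℕ) (fun _ => F k) m := by
                  exact tsum_eq_sum fun m hm =>
                    Set.indicator_of_notMem (by simpa using hm) _
              _ = (Finset.Icc (⌈(k : ℝ) / c⌉₊ - 1) ⌊((k : ℝ) + 1) / c⌋₊).card * F k := by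
                  rw [Finset.sum_congr rfl fun m hm =>
                    Set.indicator_of_mem (by simpa using hm) _]
                  simp [Finset.sum_const, nsmul_eq_mul]
              _ ≤ (⌈1 / c⌉₊ + 2 : ℕ) * F k := by
                  exact mul_le_mul_left (by exact_mod_cast Nat.cast_le.2 (hcard k)) _
        _ = (⌈1 / c⌉₊ + 2 : ℕ) * ∑' k, F k := ENNReal.tsum_mul_left
    refine ne_top_of_le_ne_top ?_ key
    exact ENNReal.mul_ne_top (by simp) htsumF
  have hGr : ∀ m, (G m).toReal = S m := by
    intro m
    rw [ENNReal.toReal_sum (fun k _ => hFtop k)]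
    exact Finset.sum_congr rfl fun k _ => ENNReal.toReal_ofReal (one_div_pos.2 (hψpos k)).le
  have hSsum : Summable S := by
    have := ENNReal.summable_toReal hGtop
    simpa [hGr] using this
  refine ⟨fun m => (S m)⁻¹, fun m => inv_pos.2 (hSpos m), ?_, ?_⟩
  · simpa [one_div, inv_inv] using hSsum
  · intro n hn
    have hk := hmem n hn
    have hle : 1 / ψ ⌊Real.logb a n⌋₊ ≤ S ⌊Real.logb b n⌋₊ :=
      Finset.single_le_sum (f := fun k => 1 / ψ k) (fun k _ => (one_div_pos.2 (hψpos k)).le) hk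
    have h1 : (S ⌊Real.logb b n⌋₊)⁻¹ ≤ (1 / ψ ⌊Real.logb a n⌋₊)⁻¹ :=
      inv_anti₀ (one_div_pos.2 (hψpos _)) hle
    simpa [one_div, inv_inv] using h1
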